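/- Let m ≥ 0 and l ≥ 1 be integers with l ≥ m, and let κ be a real number. With Q_l² = (l²−m²)/((2l−1)(2l+1)), a_l = κm/2 + (l+1)·Q_l² − l·Q_{l+1}², and c_l = κ·l(l+1)/2 − m, define A = (l−1)·Q_l²·( m − (κ/2)·l(l−1) )·c_{l+1} + ( l·(1 − Q_l² − Q_{l+1}²) + (κ/2)·m )·c_{l−1}·c_{l+1} − (l+2)·Q_{l+1}²·( 2m(l+1) + (κ/2)·l(l+2) )·c_{l−1} and B = (l−1)(l+1)·Q_l²·( m − (κ/2)·l(l−1) )·c_{l+1} − ( m² + l·a_l )·c_{l−1}·c_{l+1} + l(l+2)·Q_{l+1}²·( 2m(l+1) + (κ/2)·l(l+2) )·c_{l−1}. Then B = −l·A; consequently, the equation A·w + B·v = 0 is equivalent (when A ≠ 0) to w − l·v = 0. -/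

import Mathlib

/-- The coefficients `A` (of `w_{j,0}`) and `B` (of `v_{j,0}`) in the
lowest-order recursion for polar-led hybrid modes satisfy `B = −l·A`; hence, when
`A ≠ 0`, the equation `A·w + B·v = 0` is equivalent to `w − l·v = 0`. -/
theorem stmt_11 (m l : ℤ) (hm : 0 ≤ m) (hl : 1 ≤ l) (hlm : m ≤ l) (κ : ℝ)
    (Qsq a c : ℤ → ℝ)
    (hQ : ∀ j : ℤ, Qsq j = ((j:ℝ)^2 - (m:ℝ)^2) / ((2*(j:ℝ) - 1) * (2*(j:ℝ) + 1)))
    (ha : ∀ j : ℤ, a j = κ * (m:ℝ) / 2 + ((j:ℝ) + 1) * Qsq j - (j:ℝ) * Qsq (j+1))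
    (hc : ∀ j : ℤ, c j = κ * (j:ℝ) * ((j:ℝ) + 1) / 2 - (m:ℝ))
    (A B : ℝ)
    (hA : A = ((l:ℝ) - 1) * Qsq l * ((m:ℝ) - (κ/2) * (l:ℝ) * ((l:ℝ) - 1)) * c (l+1)
        + ((l:ℝ) * (1 - Qsq l - Qsq (l+1)) + (κ/2) * (m:ℝ)) * c (l-1) * c (l+1)
        - ((l:ℝ) + 2) * Qsq (l+1) *
            (2 * (m:ℝ) * ((l:ℝ) + 1) + (κ/2) * (l:ℝ) * ((l:ℝ) + 2)) * c (l-1))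
    (hB : B = ((l:ℝ) - 1) * ((l:ℝ) + 1) * Qsq l *
            ((m:ℝ) - (κ/2) * (l:ℝ) * ((l:ℝ) - 1)) * c (l+1)
        - ((m:ℝ)^2 + (l:ℝ) * a l) * c (l-1) * c (l+1)
        + (l:ℝ) * ((l:ℝ) + 2) * Qsq (l+1) *
            (2 * (m:ℝ) * ((l:ℝ) + 1) + (κ/2) * (l:ℝ) * ((l:ℝ) + 2)) * c (l-1)) :
    B = -(l:ℝ) * A ∧
    (A ≠ 0 → ∀ w v : ℝ, (A * w + B * v = 0 ↔ w - (l:ℝ) * v = 0)) := by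
  have hlr : (1 : ℝ) ≤ (l : ℝ) := by exact_mod_cast hl
  have h1 : (2*(l:ℝ) - 1) ≠ 0 := by nlinarith
  have h2 : (2*(l:ℝ) + 1) ≠ 0 := by nlinarith
  have h3 : (2*(l:ℝ) + 3) ≠ 0 := by nlinarith
  have hQl' : Qsq l * ((2*(l:ℝ) - 1) * (2*(l:ℝ) + 1)) = (l:ℝ)^2 - (m:ℝ)^2 := by
    rw [hQ l]
    exact div_mul_cancel₀ _ (mul_ne_zero h1 h2)
  have key : B = -(l:ℝ) * A := by
    rw [hA, hB, ha l, hc (l+1), hc (l-1)]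
    push_cast
    linear_combination (-(κ*((l:ℝ)-1)*(l:ℝ)/2 - (m:ℝ)) * (κ*((l:ℝ)+1)*((l:ℝ)+2)/2 - (m:ℝ))) * hQl'
  refine ⟨key, fun hAne w v => ?_⟩
  rw [key]
  constructor
  · intro h
    have : A * (w - (l:ℝ) * v) = 0 := by linarith [h]
    rcases mul_eq_zero.mp this with h' | h'
    · exact absurd h' hAne
    · exact h'
  · intro h
    have : w = (l:ℝ) * v := by linarith
    rw [this]; ring
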